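/- Let f(s) = s^{q-1} - s^{r-1} with p ≤ r < q < p*. Then f satisfies (f_subc): limsup_{s→∞} f(s)/s^{p-1} = +∞, and there exists η ∈ (0,1) such that limsup_{s→∞} f*(s)·s/F(η s) < p*, where F(s) = ∫_1^s f(σ) dσ and f*(s) = max_{σ∈[1,s]} f(σ). -/

import Mathlib

open Real Set Filter Topology

noncomputable def phip (p s : ℝ) : ℝ := |s| ^ (p - 2) * s

def Freg (f : ℝ → ℝ) : Prop :=
  ContinuousOn f (Ici 0) ∧ ContDiffOn ℝ 1 f (Ioi 0)

def Feq (f : ℝ → ℝ) : Prop :=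
  f 0 = 0 ∧ f 1 = 0 ∧ (∀ s : ℝ, 0 < s → s < 1 → f s < 0) ∧ (∀ s : ℝ, 1 < s → 0 < f s)

def Fzero (p : ℝ) (f : ℝ → ℝ) : Prop :=
  ∃ c : ℝ, ∀ᶠ s in 𝓝[>] (0:ℝ), c ≤ f s / s ^ (p - 1)

noncomputable def pstar (p : ℝ) (N : ℕ) : EReal :=
  if p < (N:ℝ) then (((N:ℝ) * p / ((N:ℝ) - p) : ℝ) : EReal) else ⊤

noncomputable def fstar (f : ℝ → ℝ) (s : ℝ) : ℝ := sSup (f '' Icc 1 s)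

noncomputable def Fint (f : ℝ → ℝ) (s : ℝ) : ℝ := ∫ σ in (1:ℝ)..s, f σ

def Fsubl (p : ℝ) (f : ℝ → ℝ) : Prop :=
  ∃ M : ℝ, 0 < M ∧ ∀ ε > 0, ∀ᶠ s in atTop, f s / s ^ (p - 1) ≤ M + ε

def FsubcWith (p : ℝ) (N : ℕ) (f : ℝ → ℝ) (η : ℝ) : Prop :=
  (∀ c : ℝ, ∃ᶠ s in atTop, c < f s / s ^ (p - 1)) ∧
  0 < η ∧ η < 1 ∧
  ∃ L : ℝ, (L : EReal) < pstar p N ∧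
    ∀ᶠ s in atTop, fstar f s * s / Fint f (η * s) ≤ L

def Fsubc (p : ℝ) (N : ℕ) (f : ℝ → ℝ) : Prop := ∃ η : ℝ, FsubcWith p N f η

/-- A radial solution of the Neumann problem on `[R1,R2]`. -/
def NeumannSol (p : ℝ) (N : ℕ) (R1 R2 : ℝ) (f u : ℝ → ℝ) : Prop :=
  (∀ x ∈ Icc R1 R2, DifferentiableAt ℝ u x) ∧
  ContinuousOn (deriv u) (Icc R1 R2) ∧
  (∀ x ∈ Icc R1 R2, 0 < u x) ∧
  deriv u R1 = 0 ∧ deriv u R2 = 0 ∧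
  ContinuousOn (fun x => x ^ (N - 1) * phip p (deriv u x)) (Icc R1 R2) ∧
  ∀ x ∈ Ioc R1 R2,
    HasDerivAt (fun t => t ^ (N - 1) * phip p (deriv u t)) (-(x ^ (N - 1)) * f (u x)) x

noncomputable def fhat (f : ℝ → ℝ) (s : ℝ) : ℝ := if 0 ≤ s then f s else 0

noncomputable def Fhat (f : ℝ → ℝ) (s : ℝ) : ℝ := ∫ σ in (1:ℝ)..s, fhat f σ

/-- A solution of the Cauchy problem with datum `d`, for the nonlinearity `g`. -/
def CauchySol (p : ℝ) (N : ℕ) (R1 R2 : ℝ) (g u : ℝ → ℝ) (d : ℝ) : Prop :=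
  (∀ x ∈ Icc R1 R2, DifferentiableAt ℝ u x) ∧
  ContinuousOn (deriv u) (Icc R1 R2) ∧
  u R1 = d ∧ deriv u R1 = 0 ∧
  ContinuousOn (fun x => x ^ (N - 1) * phip p (deriv u x)) (Icc R1 R2) ∧
  ∀ x ∈ Ioc R1 R2,
    HasDerivAt (fun t => t ^ (N - 1) * phip p (deriv u t)) (-(x ^ (N - 1)) * g (u x)) x

noncomputable def rOne (R1 R2 : ℝ) (u : ℝ → ℝ) : ℝ :=
  sSup {x | x ∈ Icc R1 R2 ∧ ∀ s ∈ Ico R1 x, 0 < u s}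

noncomputable def rZero (R2 η d : ℝ) (u : ℝ → ℝ) : ℝ :=
  sSup {x | x ∈ Icc 0 R2 ∧ ∀ s ∈ Ico 0 x, η * d < u s}

noncomputable def energy (p : ℝ) (f u : ℝ → ℝ) (x : ℝ) : ℝ :=
  |deriv u x| ^ p / (p / (p - 1)) + Fhat f (u x)

def NonConstOn (R1 R2 : ℝ) (u : ℝ → ℝ) : Prop :=
  ∃ x ∈ Icc R1 R2, ∃ x' ∈ Icc R1 R2, u x ≠ u x'

def DistinctOn (R1 R2 : ℝ) (u v : ℝ → ℝ) : Prop :=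
  ∃ x ∈ Icc R1 R2, u x ≠ v x

noncomputable def nOverPstar (p : ℝ) (N : ℕ) : ℝ :=
  if p < (N:ℝ) then ((N:ℝ) - p) / p else 0

theorem stmt7 (p : ℝ) (hp : 1 < p) (N : ℕ) (hN : 1 ≤ N)
    (q r : ℝ) (hpr : p ≤ r) (hrq : r < q)
    (hq : (q : EReal) < pstar p N) :
    Fsubc p N (fun s => s ^ (q - 1) - s ^ (r - 1)) := by
  have hr1 : 1 < r := lt_of_lt_of_le hp hpr
  have hq1 : 1 < q := hr1.trans hrq
  have hq0 : (0:ℝ) < q := by linarith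
  have hr0 : (0:ℝ) < r := by linarith
  obtain ⟨L, hqL, hLps⟩ : ∃ L : ℝ, q < L ∧ (L : EReal) < pstar p N := by
    by_cases hpN : p < (N:ℝ)
    · have hps : pstar p N = (((N:ℝ) * p / ((N:ℝ) - p) : ℝ) : EReal) := if_pos hpN
      rw [hps] at hq ⊢
      have hq' : q < (N:ℝ) * p / ((N:ℝ) - p) := by exact_mod_cast hq
      exact ⟨(q + (N:ℝ) * p / ((N:ℝ) - p)) / 2, by linarith,
        by exact_mod_cast (by linarith :
          (q + (N:ℝ) * p / ((N:ℝ) - p)) / 2 < (N:ℝ) * p / ((N:ℝ) - p))⟩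
    · have hps : pstar p N = ⊤ := if_neg hpN
      exact ⟨q + 1, by linarith, by rw [hps]; exact EReal.coe_lt_top _⟩
  have hL0 : (0:ℝ) < L := hq0.trans hqL
  set A : ℝ := (q + L) / (2 * L) with hA
  have hA0 : 0 < A := by positivity
  have hA1 : A < 1 := by rw [div_lt_one (by positivity)]; linarith
  set η : ℝ := A ^ (1/q) with hη
  have hη0 : 0 < η := Real.rpow_pos_of_pos hA0 _
  have hη1 : η < 1 := Real.rpow_lt_one hA0.le hA1 (by positivity)
  have hηq : η ^ q = A := by
    rw [hη, ← Real.rpow_mul hA0.le, one_div_mul_cancel hq0.ne', Real.rpow_one]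
  have hqAL : q / A < L := by
    rw [div_lt_iff₀ hA0, hA]
    rw [div_lt_one (by positivity)] at hA1
    have : A * L = (q + L) / 2 := by rw [hA]; field_simp
    nlinarith [this]
  -- Part 1 : tendsto of f s / s^(p-1)
  have hT0 : Tendsto (fun s : ℝ => s ^ (q - r) - 1) atTop atTop := by
    simpa [sub_eq_add_neg] using
      tendsto_atTop_add_const_right atTop (-1) (tendsto_rpow_atTop (by linarith : 0 < q - r))
  have hT : Tendsto (fun s : ℝ => (s ^ (q-1) - s ^ (r-1)) / s ^ (p-1)) atTop atTop := by
    apply tendsto_atTop_mono' atTop _ hT0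
    filter_upwards [eventually_ge_atTop (1:ℝ)] with s hs
    have hs0 : (0:ℝ) < s := by linarith
    have e1 : (s ^ (q-1) - s ^ (r-1)) / s ^ (p-1) = s ^ (q-p) - s ^ (r-p) := by
      rw [sub_div, ← Real.rpow_sub hs0, ← Real.rpow_sub hs0]
      ring_nf
    rw [e1]
    have e2 : s ^ (q-p) = s ^ (r-p) * s ^ (q-r) := by
      rw [← Real.rpow_add hs0]; ring_nf
    have h3 : (1:ℝ) ≤ s ^ (r-p) := Real.one_le_rpow hs (by linarith)
    have h4 : (1:ℝ) ≤ s ^ (q-r) := Real.one_le_rpow hs (by linarith)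
    nlinarith [e2]
  refine ⟨η, fun c => ((hT.eventually_gt_atTop c).frequently), hη0, hη1, L, hLps, ?_⟩
  -- the integral formula
  have hFint : ∀ t : ℝ, 0 < t →
      Fint (fun s => s ^ (q - 1) - s ^ (r - 1)) t = (t ^ q - 1) / q - (t ^ r - 1) / r := by
    intro t ht
    have hiq : IntervalIntegrable (fun x : ℝ => x ^ (q-1)) MeasureTheory.volume 1 t :=
      intervalIntegral.intervalIntegrable_rpow (Or.inl (by linarith))
    have hir : IntervalIntegrable (fun x : ℝ => x ^ (r-1)) MeasureTheory.volume 1 t :=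
      intervalIntegral.intervalIntegrable_rpow (Or.inl (by linarith))
    rw [Fint, intervalIntegral.integral_sub hiq hir,
      integral_rpow (Or.inl (by linarith : (-1:ℝ) < q - 1)),
      integral_rpow (Or.inl (by linarith : (-1:ℝ) < r - 1))]
    norm_num
  -- tendsto of denominator / s^q
  have hDen : Tendsto (fun s : ℝ => Fint (fun s => s ^ (q - 1) - s ^ (r - 1)) (η * s) / s ^ q)
      atTop (𝓝 (A / q)) := by
    have hXinv : Tendsto (fun s : ℝ => (s ^ q)⁻¹) atTop (𝓝 0) :=
      (tendsto_rpow_atTop hq0).inv_tendsto_atTop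
    have hYX : Tendsto (fun s : ℝ => s ^ (r - q)) atTop (𝓝 0) := by
      have := tendsto_rpow_neg_atTop (by linarith : 0 < q - r)
      simpa [neg_sub] using this
    have hg : Tendsto (fun s : ℝ =>
        A / q - (1/q) * (s ^ q)⁻¹ - (η ^ r / r) * s ^ (r - q) + (1/r) * (s ^ q)⁻¹)
        atTop (𝓝 (A / q)) := by
      have := (((tendsto_const_nhds (x := A / q)).sub (hXinv.const_mul (1/q))).sub
        (hYX.const_mul (η ^ r / r))).add (hXinv.const_mul (1/r))
      simpa using this
    apply hg.congr'
    filter_upwards [eventually_gt_atTop (0:ℝ)] with s hs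
    have hηs : 0 < η * s := by positivity
    have hsq : (0:ℝ) < s ^ q := Real.rpow_pos_of_pos hs q
    have hsr : (0:ℝ) < s ^ r := Real.rpow_pos_of_pos hs r
    rw [hFint _ hηs]
    have e1 : (η * s) ^ q = A * s ^ q := by
      rw [Real.mul_rpow hη0.le hs.le, hηq]
    have e2 : (η * s) ^ r = η ^ r * s ^ r := Real.mul_rpow hη0.le hs.le
    have e3 : s ^ (r - q) = s ^ r / s ^ q := Real.rpow_sub hs r q
    rw [e1, e2, e3]
    field_simp
    ring
  have hAq0 : (0:ℝ) < A / q := by positivity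
  have hInv : Tendsto (fun s : ℝ => s ^ q / Fint (fun s => s ^ (q - 1) - s ^ (r - 1)) (η * s))
      atTop (𝓝 (q / A)) := by
    have := hDen.inv₀ hAq0.ne'
    simpa [inv_div] using this
  have hpos : ∀ᶠ s : ℝ in atTop, 0 < Fint (fun s => s ^ (q - 1) - s ^ (r - 1)) (η * s) := by
    filter_upwards [hDen.eventually (eventually_gt_nhds hAq0), eventually_gt_atTop (0:ℝ)]
      with s h1 h2
    have hsq : (0:ℝ) < s ^ q := Real.rpow_pos_of_pos h2 q
    by_contra hcon
    push_neg at hcon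
    have : Fint (fun s => s ^ (q - 1) - s ^ (r - 1)) (η * s) / s ^ q ≤ 0 :=
      div_nonpos_of_nonpos_of_nonneg hcon hsq.le
    linarith
  filter_upwards [hInv.eventually_le_const hqAL, hpos, eventually_ge_atTop (1:ℝ)]
    with s h1 h2 hs1
  have hs0 : (0:ℝ) < s := by linarith
  have hfs : fstar (fun s => s ^ (q - 1) - s ^ (r - 1)) s ≤ s ^ (q - 1) := by
    apply Real.sSup_le _ (Real.rpow_nonneg hs0.le _)
    rintro x ⟨σ, ⟨hσ1, hσs⟩, rfl⟩
    have hσ0 : (0:ℝ) < σ := by linarith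
    have : σ ^ (q-1) ≤ s ^ (q-1) := Real.rpow_le_rpow hσ0.le hσs (by linarith)
    have : (0:ℝ) < σ ^ (r-1) := Real.rpow_pos_of_pos hσ0 _
    simp only
    nlinarith [Real.rpow_le_rpow hσ0.le hσs (by linarith : (0:ℝ) ≤ q - 1)]
  have hfss : fstar (fun s => s ^ (q - 1) - s ^ (r - 1)) s * s ≤ s ^ q := by
    calc fstar (fun s => s ^ (q - 1) - s ^ (r - 1)) s * s ≤ s ^ (q-1) * s :=
          mul_le_mul_of_nonneg_right hfs hs0.le
      _ = s ^ q := by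
          rw [← Real.rpow_add_one hs0.ne' (q-1)]; ring_nf
  calc fstar (fun s => s ^ (q - 1) - s ^ (r - 1)) s * s /
        Fint (fun s => s ^ (q - 1) - s ^ (r - 1)) (η * s)
      ≤ s ^ q / Fint (fun s => s ^ (q - 1) - s ^ (r - 1)) (η * s) :=
        (div_le_div_iff_of_pos_right h2).mpr hfss
    _ ≤ L := h1
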